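/- For every real number x with −1 < x ≤ 1, one has log(1 + x) ≤ x − (1 − log 2) x²; equivalently, 1 + x ≤ e^{x − (1 − log 2) x²} on (−1, 1]. -/

import Mathlib

open Real Set

private lemma neg_case (x : ℝ) (h1 : -1 < x) (h2 : x ≤ 0) :
    Real.log (1 + x) ≤ x - (1 - Real.log 2) * x ^ 2 := by
  set β : ℝ := 1 - Real.log 2 with hβ
  have hβ1 : β < 1/2 := by have := Real.log_two_gt_d9; simp only [hβ]; linarith
  have hβ0 : 0 < β := by have := Real.log_two_lt_d9; simp only [hβ]; linarith
  set f : ℝ → ℝ := fun y => y - β * y ^ 2 - Real.log (1 + y) with hf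
  have key : AntitoneOn f (Ioc (-1 : ℝ) 0) := by
    have hderiv : ∀ y ∈ interior (Ioc (-1 : ℝ) 0), HasDerivAt f (1 - 2*β*y - 1/(1+y)) y := by
      intro y hy
      rw [interior_Ioc] at hy
      have hy1 : 0 < 1 + y := by have := hy.1; linarith
      have : HasDerivAt (fun y : ℝ => Real.log (1 + y)) (1/(1+y)) y := by
        have := (Real.hasDerivAt_log hy1.ne').comp y ((hasDerivAt_id y).const_add 1)
        simpa [Function.comp_def] using this
      have h2' : HasDerivAt (fun y : ℝ => y - β * y ^ 2) (1 - 2*β*y) y := by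
        have := ((hasDerivAt_pow 2 y).const_mul β)
        have := (hasDerivAt_id y).sub this
        simpa [mul_comm, mul_assoc, Pi.sub_def] using this
      simpa [hf, Pi.sub_def] using h2'.sub this
    apply antitoneOn_of_deriv_nonpos (convex_Ioc _ _)
    · apply ContinuousOn.sub (ContinuousOn.sub (continuousOn_id) (by fun_prop))
      apply ContinuousOn.log (by fun_prop)
      intro y hy
      have := hy.1; intro h; nlinarith [h]
    · intro y hy
      exact (hderiv y hy).differentiableAt.differentiableWithinAt
    · intro y hy
      rw [(hderiv y hy).deriv]
      rw [interior_Ioc] at hy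
      obtain ⟨hya, hyb⟩ := hy
      have hy1 : 0 < 1 + y := by linarith
      rw [sub_nonpos, le_div_iff₀ hy1]
      nlinarith [mul_nonneg hβ0.le (sq_nonneg y), mul_neg_of_pos_of_neg (by linarith : (0:ℝ) < 1 - 2*β) hyb]
  have h0 : f 0 = 0 := by simp [hf]
  have := key (show x ∈ Ioc (-1:ℝ) 0 from ⟨h1, h2⟩) (show (0:ℝ) ∈ Ioc (-1:ℝ) 0 from ⟨by norm_num, le_refl 0⟩) h2
  rw [h0] at this
  simp only [hf] at this
  linarith

private lemma mid_case (x β : ℝ) (hx0 : 0 < x) (hxm : x ≤ 0.65)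
    (hb1 : 0.3068 ≤ β) (hb2 : β ≤ 0.30686) :
    Real.log (1 + x) ≤ x - β * x ^ 2 := by
  have ht : 0 ≤ x - β * x ^ 2 := by nlinarith
  have hexp := Real.quadratic_le_exp_of_nonneg ht
  have h1x : (0:ℝ) < 1 + x := by linarith
  rw [Real.log_le_iff_le_exp h1x]
  have hQ : 0 ≤ (1 - β*x)^2 - 2*β := by
    nlinarith [mul_nonneg (mul_nonneg (by linarith : (0:ℝ) ≤ β) (by linarith : (0:ℝ) ≤ 0.65 - x)) (by nlinarith : (0:ℝ) ≤ 2 - β*x - 0.65*β), sq_nonneg (β - 0.3068)]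
  have : 1 + x ≤ 1 + (x - β*x^2) + (x - β*x^2)^2/2 := by
    nlinarith [mul_nonneg (sq_nonneg x) hQ]
  exact this.trans hexp

theorem log_one_add_le_sub_beta_sq (x : ℝ) (h1 : -1 < x) (h2 : x ≤ 1) :
    Real.log (1 + x) ≤ x - (1 - Real.log 2) * x ^ 2 := by
  rcases le_or_gt x 0 with hx0 | hx0
  · exact neg_case x h1 hx0
  rcases le_or_gt x 0.65 with hxm | hxm
  · have hl2 := Real.log_two_gt_d9
    have hl2' := Real.log_two_lt_d9
    exact mid_case x (1 - Real.log 2) hx0 hxm (by linarith) (by linarith)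
  · -- large case via log(1+x) ≤ log 2 + (1+x)/2 - 1
    have hl2 := Real.log_two_gt_d9
    have hl2' := Real.log_two_lt_d9
    have h1x : (0:ℝ) < (1 + x)/2 := by linarith
    have hlog : Real.log ((1+x)/2) ≤ (1+x)/2 - 1 := Real.log_le_sub_one_of_pos h1x
    have : Real.log (1 + x) = Real.log 2 + Real.log ((1+x)/2) := by
      rw [← Real.log_mul (by norm_num) h1x.ne']
      ring_nf
    rw [this]
    nlinarith [sq_nonneg (x-1)]
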